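/- For every μ > 0, the derivative of the generalized Mathieu series with respect to r satisfies d/dr S_μ(r) = −2r(μ+1)·S_{μ+1}(r) for all r > 0. -/

import Mathlib

open Real

noncomputable def mathieuS (μ r : ℝ) : ℝ :=
  ∑' n : ℕ, (2 * ((n : ℝ) + 1)) / ((((n : ℝ) + 1) ^ 2 + r ^ 2) ^ (μ + 1))

noncomputable def zetaR (s : ℝ) : ℝ := ∑' n : ℕ, ((n : ℝ) + 1) ^ (-s)

lemma aux_summable {s : ℝ} (hs : 1 < s) : Summable fun n : ℕ => ((n : ℝ) + 1) ^ (-s) := by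
  have h : Summable fun n : ℕ => (n : ℝ) ^ (-s) :=
    Real.summable_nat_rpow.2 (by linarith)
  have := (summable_nat_add_iff 1).2 h
  refine this.congr fun n => ?_
  push_cast
  ring_nf

lemma pos_A (c t : ℝ) (hc : 0 < c) : 0 < c ^ 2 + t ^ 2 := by positivity

theorem stmt8 (μ r : ℝ) (hμ : 0 < μ) (hr : 0 < r) :
    HasDerivAt (fun t => mathieuS μ t) (-2 * r * (μ + 1) * mathieuS (μ + 1) r) r := by
  set f : ℕ → ℝ → ℝ := fun n t => (2 * ((n : ℝ) + 1)) / ((((n : ℝ) + 1) ^ 2 + t ^ 2) ^ (μ + 1))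
  set f' : ℕ → ℝ → ℝ := fun n t =>
    -(4 * (μ + 1) * t * ((n : ℝ) + 1)) * ((((n : ℝ) + 1) ^ 2 + t ^ 2) ^ (-(μ + 2)))
  set u : ℕ → ℝ := fun n => 2 * (μ + 1) * ((n : ℝ) + 1) ^ (-(2 * μ + 2))
  have hcpos : ∀ n : ℕ, (0 : ℝ) < (n : ℝ) + 1 := fun n => by positivity
  have hApos : ∀ (n : ℕ) (t : ℝ), (0 : ℝ) < ((n : ℝ) + 1) ^ 2 + t ^ 2 :=
    fun n t => pos_A _ _ (hcpos n)
  -- summability of bound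
  have hu : Summable u := by
    apply Summable.mul_left
    exact aux_summable (by linarith)
  -- derivative of each term
  have hderiv : ∀ (n : ℕ) (t : ℝ), HasDerivAt (f n) (f' n t) t := by
    intro n t
    set c := (n : ℝ) + 1
    set A := c ^ 2 + t ^ 2 with hA
    have hA0 : (0 : ℝ) < A := hApos n t
    have h1 : HasDerivAt (fun x : ℝ => c ^ 2 + x ^ 2) (2 * t) t := by
      simpa using (hasDerivAt_pow 2 t).const_add (c ^ 2)
    have h2 : HasDerivAt (fun x : ℝ => (c ^ 2 + x ^ 2) ^ (μ + 1))
        (2 * t * (μ + 1) * A ^ μ) t := by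
      have := h1.rpow_const (p := μ + 1) (Or.inl (ne_of_gt hA0))
      simpa using this
    have hg0 : A ^ (μ + 1) ≠ 0 := (Real.rpow_pos_of_pos hA0 _).ne'
    have h3 := (hasDerivAt_const t (2 * c)).div h2 hg0
    convert h3 using 1
    · rfl
    · rfl
    · rfl
    have hsq : (A ^ (μ + 1)) ^ 2 = A ^ (2 * μ + 2) := by
      rw [← Real.rpow_natCast (A ^ (μ + 1)) 2, ← Real.rpow_mul hA0.le]
      norm_num; ring_nf
    have hdiv : A ^ μ / A ^ (2 * μ + 2) = A ^ (-(μ + 2)) := by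
      rw [← Real.rpow_sub hA0]; ring_nf
    rw [hsq]
    rw [show (0 * A ^ (μ + 1) - 2 * c * (2 * t * (μ + 1) * A ^ μ)) / A ^ (2 * μ + 2)
        = -(4 * (μ + 1) * t * c) * (A ^ μ / A ^ (2 * μ + 2)) by ring]
    rw [hdiv]
  -- bound on derivatives
  have hbound : ∀ (n : ℕ) (t : ℝ), ‖f' n t‖ ≤ u n := by
    intro n t
    set c := (n : ℝ) + 1
    have hc : (0 : ℝ) < c := hcpos n
    set A := c ^ 2 + t ^ 2 with hA
    have hA0 : (0 : ℝ) < A := hApos n t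
    have hAsplit : A ^ (-(μ + 2)) = A⁻¹ * A ^ (-(μ + 1)) := by
      rw [← Real.rpow_neg_one A, ← Real.rpow_add hA0]; ring_nf
    have h2ct : 2 * c * |t| ≤ A := by
      nlinarith [sq_nonneg (c - |t|), sq_abs t]
    have habs : ‖f' n t‖ = 4 * (μ + 1) * |t| * c * A ^ (-(μ + 2)) := by
      rw [Real.norm_eq_abs]
      rw [abs_mul, abs_neg, abs_of_nonneg (Real.rpow_nonneg hA0.le _)]
      rw [abs_mul, abs_mul, abs_mul]
      rw [abs_of_nonneg (by norm_num : (0:ℝ) ≤ 4), abs_of_nonneg (by linarith : (0:ℝ) ≤ μ + 1),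
        abs_of_nonneg hc.le]
    rw [habs, hAsplit]
    have h1 : |t| * A⁻¹ ≤ 1 / (2 * c) := by
      rw [← div_eq_mul_inv, div_le_div_iff₀ hA0 (by positivity)]
      nlinarith [h2ct]
    have h2 : A ^ (-(μ + 1)) ≤ (c ^ 2) ^ (-(μ + 1)) := by
      apply Real.rpow_le_rpow_of_nonpos (by positivity) (by nlinarith [sq_nonneg t]) (by linarith)
    have h3 : (c ^ 2) ^ (-(μ + 1)) = c ^ (-(2 * μ + 2)) := by
      rw [← Real.rpow_natCast c 2, ← Real.rpow_mul hc.le]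
      norm_num; ring_nf
    calc 4 * (μ + 1) * |t| * c * (A⁻¹ * A ^ (-(μ + 1)))
        = (4 * (μ + 1) * c) * ((|t| * A⁻¹) * A ^ (-(μ + 1))) := by ring
      _ ≤ (4 * (μ + 1) * c) * ((1 / (2 * c)) * (c ^ 2) ^ (-(μ + 1))) := by
          apply mul_le_mul_of_nonneg_left _ (by positivity)
          exact mul_le_mul h1 h2 (Real.rpow_nonneg hA0.le _) (by positivity)
      _ = 2 * (μ + 1) * (c ^ 2) ^ (-(μ + 1)) := by field_simp; ring
      _ = u n := by rw [h3]
  -- summability at r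
  have hf0 : Summable fun n => f n r := by
    apply Summable.of_nonneg_of_le (fun n => by positivity)
      (fun n => ?_) ((aux_summable (s := 2 * μ + 1) (by linarith)).mul_left 2)
    show (2 * ((n : ℝ) + 1)) / ((((n : ℝ) + 1) ^ 2 + r ^ 2) ^ (μ + 1))
        ≤ 2 * ((n : ℝ) + 1) ^ (-(2 * μ + 1))
    set c := (n : ℝ) + 1
    have hc : (0 : ℝ) < c := hcpos n
    have hA0 : (0 : ℝ) < c ^ 2 + r ^ 2 := hApos n r
    have h2 : (c ^ 2) ^ (μ + 1) ≤ (c ^ 2 + r ^ 2) ^ (μ + 1) :=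
      Real.rpow_le_rpow (by positivity) (by nlinarith [sq_nonneg r]) (by linarith)
    calc 2 * c / (c ^ 2 + r ^ 2) ^ (μ + 1) ≤ 2 * c / (c ^ 2) ^ (μ + 1) := by
          apply div_le_div_of_nonneg_left (by positivity) (by positivity) h2
      _ = 2 * c ^ (-(2 * μ + 1)) := by
          rw [div_eq_iff (by positivity), ← Real.rpow_natCast c 2,
            ← Real.rpow_mul hc.le, mul_assoc, ← Real.rpow_add hc,
            show (-(2 * μ + 1) + ((2 : ℕ) : ℝ) * (μ + 1) : ℝ) = 1 by push_cast; ring,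
            Real.rpow_one]
  have key := hasDerivAt_tsum hu hderiv hbound hf0 r
  have hfun : (fun t => mathieuS μ t) = fun t => ∑' n, f n t := rfl
  rw [hfun]
  convert key using 1
  · rfl
  · rfl
  rw [show mathieuS (μ + 1) r = ∑' n : ℕ,
      (2 * ((n : ℝ) + 1)) / ((((n : ℝ) + 1) ^ 2 + r ^ 2) ^ (μ + 1 + 1)) from rfl,
    ← tsum_mul_left]
  refine tsum_congr fun n => ?_
  have hA0 : (0 : ℝ) < ((n : ℝ) + 1) ^ 2 + r ^ 2 := hApos n r
  show -2 * r * (μ + 1) *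
      ((2 * ((n : ℝ) + 1)) / ((((n : ℝ) + 1) ^ 2 + r ^ 2) ^ (μ + 1 + 1))) = f' n r
  rw [show f' n r = -(4 * (μ + 1) * r * ((n : ℝ) + 1)) *
      ((((n : ℝ) + 1) ^ 2 + r ^ 2) ^ (-(μ + 2))) from rfl]
  rw [show (μ + 1 + 1 : ℝ) = μ + 2 by ring, Real.rpow_neg hA0.le, div_eq_mul_inv]
  ring
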